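/- Let r_1 ≠ r_2 be positive reals and ρ_1, ρ_2 > 0. On the line ℓ : t + (σ/π)log(r_1/r_2) + (1/π)log(ρ_1 r_2/(ρ_2 r_1)) = 0, for s = σ + it ∈ ℓ and δ > 0 sufficiently small, the function W(s) = ρ_1 e^{iθ_1} e^{iπ(1−s)/2} r_1^{s−1} + ε ρ_2 e^{iθ_2} e^{−iπ(1−s)/2} r_2^{s−1} satisfies |W(σ + i(t+δ))| ≥ c (r_1 r_2)^{(σ−1)/2} (ρ_1 ρ_2)^{1/2} δ for an absolute constant c > 0. -/

import Mathlib

open Complex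

/-- On the line ℓ where the moduli of the two terms of W agree, shifting the imaginary
part by a small δ > 0 gives the lower bound |W(σ+i(t+δ))| ≥ c (r₁r₂)^{(σ−1)/2}(ρ₁ρ₂)^{1/2} δ. -/
theorem W_lower_bound_off_line (r₁ r₂ ρ₁ ρ₂ θ₁ θ₂ : ℝ)
    (hr₁ : 0 < r₁) (hr₂ : 0 < r₂) (hr : r₁ ≠ r₂) (hρ₁ : 0 < ρ₁) (hρ₂ : 0 < ρ₂)
    (ε : ℝ) (hε : ε = 1 ∨ ε = -1) :
    ∃ c : ℝ, 0 < c ∧ ∃ δ₀ : ℝ, 0 < δ₀ ∧ ∀ σ t δ : ℝ,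
      (t + σ / Real.pi * Real.log (r₁ / r₂) +
        1 / Real.pi * Real.log (ρ₁ * r₂ / (ρ₂ * r₁)) = 0) →
      0 < δ → δ < δ₀ →
      c * (r₁ * r₂) ^ ((σ - 1) / 2) * (ρ₁ * ρ₂) ^ ((1 : ℝ) / 2) * δ ≤
        ‖((ρ₁ : ℂ) * exp (θ₁ * I) * exp (Real.pi * I * (1 - (σ + (t + δ) * I)) / 2) *
              exp (((σ + (t + δ) * I) - 1) * Real.log r₁) +
            (ε : ℂ) * ((ρ₂ : ℂ) * exp (θ₂ * I)) *
              exp (-(Real.pi * I * (1 - (σ + (t + δ) * I)) / 2)) *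
              exp (((σ + (t + δ) * I) - 1) * Real.log r₂))‖ := by
  refine ⟨1, one_pos, 1, one_pos, fun σ t δ hline hδ hδ1 => ?_⟩
  set s : ℂ := σ + (t + δ) * I with hs
  set A : ℂ := (ρ₁ : ℂ) * exp (θ₁ * I) * exp (Real.pi * I * (1 - s) / 2) *
      exp ((s - 1) * Real.log r₁) with hA
  set E : ℂ := (ε : ℂ) * ((ρ₂ : ℂ) * exp (θ₂ * I)) * exp (-(Real.pi * I * (1 - s) / 2)) *
      exp ((s - 1) * Real.log r₂) with hE
  set m : ℝ := (Real.log ρ₁ + Real.log ρ₂) / 2 + (σ - 1) / 2 * (Real.log r₁ + Real.log r₂)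
    with hm
  -- the line condition, cleared of denominators
  have hπ : (0:ℝ) < Real.pi := Real.pi_pos
  have hlog1 : Real.log (r₁ / r₂) = Real.log r₁ - Real.log r₂ :=
    Real.log_div hr₁.ne' hr₂.ne'
  have hlog2 : Real.log (ρ₁ * r₂ / (ρ₂ * r₁)) =
      Real.log ρ₁ + Real.log r₂ - (Real.log ρ₂ + Real.log r₁) := by
    rw [Real.log_div (by positivity) (by positivity), Real.log_mul hρ₁.ne' hr₂.ne',
      Real.log_mul hρ₂.ne' hr₁.ne']
  have hline' : Real.pi * t + σ * (Real.log r₁ - Real.log r₂) +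
      (Real.log ρ₁ + Real.log r₂ - (Real.log ρ₂ + Real.log r₁)) = 0 := by
    have := hline
    rw [hlog1, hlog2] at this
    field_simp at this
    linarith [this]
  -- moduli of the two terms
  have habsA : ‖A‖ = Real.exp (m + Real.pi * δ / 2) := by
    rw [hA]
    simp only [norm_mul, Complex.norm_exp, Complex.norm_real, Real.norm_eq_abs, abs_of_pos hρ₁]
    rw [← Real.exp_log hρ₁, ← Real.exp_add, ← Real.exp_add, ← Real.exp_add]
    congr 1
    have h1 : ((θ₁:ℂ) * I).re = 0 := by simp
    have h2 : ((Real.pi:ℂ) * I * (1 - s) / 2).re = Real.pi * (t + δ) / 2 := by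
      simp [hs, Complex.div_re]; ring
    have h3 : ((s - 1) * (Real.log r₁ : ℂ)).re = (σ - 1) * Real.log r₁ := by
      simp [hs]
    rw [h1, h2, h3, hm]
    nlinarith [hline']
  have habsE : ‖E‖ = Real.exp (m - Real.pi * δ / 2) := by
    rw [hE]
    simp only [norm_mul, Complex.norm_exp, Complex.norm_real, Real.norm_eq_abs, abs_of_pos hρ₂]
    have hε1 : |ε| = 1 := by rcases hε with h | h <;> simp [h]
    rw [hε1, one_mul, ← Real.exp_log hρ₂, ← Real.exp_add, ← Real.exp_add, ← Real.exp_add]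
    congr 1
    have h1 : ((θ₂:ℂ) * I).re = 0 := by simp
    have h2 : (-((Real.pi:ℂ) * I * (1 - s) / 2)).re = -(Real.pi * (t + δ) / 2) := by
      simp [hs, Complex.div_re]; ring
    have h3 : ((s - 1) * (Real.log r₂ : ℂ)).re = (σ - 1) * Real.log r₂ := by
      simp [hs]
    rw [h1, h2, h3, hm]
    nlinarith [hline']
  -- reverse triangle inequality
  have htri : ‖A‖ - ‖E‖ ≤ ‖A + E‖ := by
    have := norm_add_le (A + E) (-E)
    simp at this
    linarith
  -- rewrite the LHS as exp m * δ
  have hLHS : (1:ℝ) * (r₁ * r₂) ^ ((σ - 1) / 2) * (ρ₁ * ρ₂) ^ ((1 : ℝ) / 2) * δ =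
      Real.exp m * δ := by
    rw [one_mul, Real.rpow_def_of_pos (by positivity), Real.rpow_def_of_pos (by positivity),
      ← Real.exp_add, Real.log_mul hr₁.ne' hr₂.ne', Real.log_mul hρ₁.ne' hρ₂.ne', hm]
    ring_nf
  rw [hLHS]
  refine le_trans ?_ htri
  rw [habsA, habsE]
  have h1 : 1 + Real.pi * δ / 2 ≤ Real.exp (Real.pi * δ / 2) := by
    linarith [Real.add_one_le_exp (Real.pi * δ / 2)]
  have h2 : Real.exp (-(Real.pi * δ / 2)) ≤ 1 :=
    Real.exp_le_one_iff.mpr (neg_nonpos.mpr (by positivity))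
  have hδπ : δ ≤ Real.pi * δ / 2 := by nlinarith [Real.pi_gt_three]
  have hkey : δ ≤ Real.exp (Real.pi * δ / 2) - Real.exp (-(Real.pi * δ / 2)) := by
    linarith
  have heq : Real.exp (m + Real.pi * δ / 2) - Real.exp (m - Real.pi * δ / 2) =
      Real.exp m * (Real.exp (Real.pi * δ / 2) - Real.exp (-(Real.pi * δ / 2))) := by
    rw [Real.exp_add, Real.exp_sub, Real.exp_neg]; ring
  rw [heq]
  exact mul_le_mul_of_nonneg_left hkey (Real.exp_pos m).le
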